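/- dim HL^2(F_n^1, V) = 4k, with cohomology classes represented by the cocycles θ_{1,j}(e_2,e_1)=x_j, θ_{2,j}(e_n,e_1)=x_j, θ_{3,j}(e_1,e_2)=x_j, θ_{4,j}(e_2,e_2)=x_j for 1 ≤ j ≤ k. -/

import Mathlib

/-- Multiplication of the algebra `F_n^1`: `[e_1,e_1] = e_3`,
`[e_i,e_1] = e_{i+1}` for `2 ≤ i ≤ n-1`, other products zero. -/
def F1mul (n : ℕ) (x y : Fin n → ℂ) : Fin n → ℂ :=
  fun k =>
    if h : (k : ℕ) = 2 then
      (x ⟨0, by have := k.isLt; omega⟩ + x ⟨1, by have := k.isLt; omega⟩) *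
        y ⟨0, by have := k.isLt; omega⟩
    else if h2 : 3 ≤ (k : ℕ) then
      x ⟨(k : ℕ) - 1, by have := k.isLt; omega⟩ * y ⟨0, by have := k.isLt; omega⟩
    else 0

namespace F1aux

/-- standard basis vectors -/
noncomputable def e (n : ℕ) (i : Fin n) : Fin n → ℂ := Pi.single i 1

variable {n : ℕ}

lemma e_apply (i j : Fin n) : e n i j = if j = i then 1 else 0 := by
  simp [e, Pi.single_apply]

lemma mul_right_zero (hn : n ≥ 4) (x y : Fin n → ℂ) (h : y ⟨0, by omega⟩ = 0) :
    F1mul n x y = 0 := by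
  funext j
  simp only [F1mul, Pi.zero_apply]
  split_ifs with h1 h2
  · rw [h]; ring
  · rw [h]; ring
  · rfl

lemma mul_add_left (x x' y : Fin n → ℂ) :
    F1mul n (x + x') y = F1mul n x y + F1mul n x' y := by
  funext j
  simp only [F1mul, Pi.add_apply]
  split_ifs <;> ring

lemma mul_smul_left (a : ℂ) (x y : Fin n → ℂ) :
    F1mul n (a • x) y = a • F1mul n x y := by
  funext j
  simp only [F1mul, Pi.smul_apply, smul_eq_mul]
  split_ifs <;> ring

lemma mul_add_right (x y y' : Fin n → ℂ) :
    F1mul n x (y + y') = F1mul n x y + F1mul n x y' := by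
  funext j
  simp only [F1mul, Pi.add_apply]
  split_ifs <;> ring

lemma mul_smul_right (a : ℂ) (x y : Fin n → ℂ) :
    F1mul n x (a • y) = a • F1mul n x y := by
  funext j
  simp only [F1mul, Pi.smul_apply, smul_eq_mul]
  split_ifs <;> ring

lemma mulE0 (hn : n ≥ 4) (x : Fin n → ℂ) (j : Fin n) :
    F1mul n x (e n ⟨0, by omega⟩) j =
      if (j : ℕ) = 2 then x ⟨0, by omega⟩ + x ⟨1, by omega⟩
      else if 3 ≤ (j : ℕ) then x ⟨(j : ℕ) - 1, by have := j.isLt; omega⟩ else 0 := by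
  simp only [F1mul]
  split_ifs with h1 h2 <;>
    simp [show e n ⟨0, by omega⟩ ⟨0, by omega⟩ = 1 from by simp [e]]

lemma mulE0_0 (hn : n ≥ 4) :
    F1mul n (e n ⟨0, by omega⟩) (e n ⟨0, by omega⟩) = e n ⟨2, by omega⟩ := by
  funext j
  rw [mulE0 hn]
  simp only [e_apply, Fin.ext_iff, Fin.val_mk, Fin.mk.injEq]
  split_ifs <;> first | contradiction | (exfalso; omega) | norm_num

lemma mulE0_1 (hn : n ≥ 4) :
    F1mul n (e n ⟨1, by omega⟩) (e n ⟨0, by omega⟩) = e n ⟨2, by omega⟩ := by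
  funext j
  rw [mulE0 hn]
  simp only [e_apply, Fin.ext_iff, Fin.val_mk, Fin.mk.injEq]
  split_ifs <;> first | contradiction | (exfalso; omega) | norm_num

lemma mulE0_mid (hn : n ≥ 4) (i : ℕ) (h2 : 2 ≤ i) (hle : i ≤ n - 2) :
    F1mul n (e n ⟨i, by omega⟩) (e n ⟨0, by omega⟩) = e n ⟨i + 1, by omega⟩ := by
  have hle' : i + 2 ≤ n := by omega
  funext j
  rw [mulE0 hn]
  simp only [e_apply, Fin.ext_iff, Fin.val_mk, Fin.mk.injEq]
  split_ifs <;> first | contradiction | (exfalso; omega) | norm_num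

lemma mulE0_top (hn : n ≥ 4) :
    F1mul n (e n ⟨n - 1, by omega⟩) (e n ⟨0, by omega⟩) = 0 := by
  funext j
  rw [mulE0 hn]
  simp only [e_apply, Fin.ext_iff, Fin.val_mk, Fin.mk.injEq, Pi.zero_apply]
  split_ifs <;> first | contradiction | (exfalso; omega) | norm_num

variable {k : ℕ}

section Cocycle

variable (hn : n ≥ 4) (θ : (Fin n → ℂ) →ₗ[ℂ] (Fin n → ℂ) →ₗ[ℂ] (Fin k → ℂ))
  (hθ : ∀ x y z : Fin n → ℂ,
    θ x (F1mul n y z) = θ (F1mul n x y) z - θ (F1mul n x z) y)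

include hn hθ

/-- `θ(x, e_m) = 0` for `m ≥ 2`. -/
lemma vanish_right : ∀ m : ℕ, 2 ≤ m → ∀ (hm : m < n) (x : Fin n → ℂ),
    θ x (e n ⟨m, hm⟩) = 0 := by
  intro m hm2
  induction m, hm2 using Nat.le_induction with
  | base =>
    intro hm x
    have h := hθ x (e n ⟨0, by omega⟩) (e n ⟨0, by omega⟩)
    rw [mulE0_0 hn] at h
    exact h.trans (sub_self _)
  | succ m hm2 ih =>
    intro hm x
    have hbr : F1mul n (e n ⟨m, by omega⟩) (e n ⟨0, by omega⟩) = e n ⟨m + 1, by omega⟩ :=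
      mulE0_mid hn m hm2 (by omega)
    have h1 : F1mul n x (e n ⟨m, by omega⟩) = 0 :=
      mul_right_zero hn x _ (by rw [e_apply]; simp [Fin.ext_iff]; omega)
    have h : θ x (e n ⟨m + 1, hm⟩) =
        θ (0 : Fin n → ℂ) (e n ⟨0, by omega⟩) -
          θ (F1mul n x (e n ⟨0, by omega⟩)) (e n ⟨m, by omega⟩) := by
      rw [← h1, ← hbr]
      exact hθ x _ _
    rw [h, ih (by omega), map_zero, LinearMap.zero_apply, sub_zero]

/-- `θ(e_i, e_1) = 0` for `i ≥ 2`. -/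
lemma vanish_e1 : ∀ i : ℕ, 2 ≤ i → ∀ (hi : i < n),
    θ (e n ⟨i, hi⟩) (e n ⟨1, by omega⟩) = 0 := by
  have claim : ∀ x : Fin n → ℂ, θ (F1mul n x (e n ⟨0, by omega⟩)) (e n ⟨1, by omega⟩) = 0 := by
    intro x
    have h := hθ x (e n ⟨1, by omega⟩) (e n ⟨0, by omega⟩)
    rw [mulE0_1 hn] at h
    have h1 : F1mul n x (e n ⟨1, by omega⟩) = 0 :=
      mul_right_zero hn x _ (by rw [e_apply]; simp [Fin.ext_iff])
    rw [h1, map_zero, LinearMap.zero_apply, zero_sub,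
      vanish_right hn θ hθ 2 (by omega) (by omega)] at h
    exact neg_eq_zero.mp h.symm
  intro i hi2 hi
  rcases Nat.lt_or_ge i 3 with h3 | h3
  · have : i = 2 := by omega
    subst this
    rw [← mulE0_0 hn]
    exact claim _
  · have heq : e n ⟨i, hi⟩ = F1mul n (e n ⟨i - 1, by omega⟩) (e n ⟨0, by omega⟩) := by
      rw [mulE0_mid hn (i - 1) (by omega) (by omega)]
      funext j
      rw [e_apply, e_apply]
      simp only [Fin.ext_iff, Fin.val_mk]
      split_ifs <;> first | rfl | (exfalso; omega)
    rw [heq]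
    exact claim _

end Cocycle

section Phi

variable (hn : n ≥ 4) {k : ℕ} (θ : (Fin n → ℂ) →ₗ[ℂ] (Fin n → ℂ) →ₗ[ℂ] (Fin k → ℂ))

/-- values of the coboundary map on basis vectors -/
noncomputable def gfun : Fin n → (Fin k → ℂ) := fun m =>
  if (m : ℕ) = 2 then θ (e n ⟨0, by omega⟩) (e n ⟨0, by omega⟩)
  else if h : 3 ≤ (m : ℕ) then
    θ (e n ⟨(m : ℕ) - 1, by have := m.isLt; omega⟩) (e n ⟨0, by omega⟩)
  else 0

/-- the linear map `φ` -/
noncomputable def phi : (Fin n → ℂ) →ₗ[ℂ] (Fin k → ℂ) where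
  toFun := fun v => ∑ m : Fin n, v m • gfun hn θ m
  map_add' := by
    intro v w
    simp [add_smul, Finset.sum_add_distrib]
  map_smul' := by
    intro a v
    simp [smul_smul, Finset.smul_sum]

lemma phi_e (m : Fin n) : phi hn θ (e n m) = gfun hn θ m := by
  show (∑ m' : Fin n, e n m m' • gfun hn θ m') = gfun hn θ m
  rw [Finset.sum_eq_single m]
  · simp [e_apply]
  · intro b _ hb
    simp [e_apply, hb]
  · intro hm
    exact absurd (Finset.mem_univ m) hm

lemma gfun_two : gfun hn θ ⟨2, by omega⟩ = θ (e n ⟨0, by omega⟩) (e n ⟨0, by omega⟩) := by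
  simp [gfun]

lemma gfun_ge3 (m : ℕ) (h3 : 3 ≤ m) (hm : m < n) :
    gfun hn θ ⟨m, hm⟩ = θ (e n ⟨m - 1, by omega⟩) (e n ⟨0, by omega⟩) := by
  simp only [gfun, Fin.val_mk]
  rw [if_neg (by omega), dif_pos h3]

/-- the bilinear map representing the right-hand side -/
noncomputable def Bmap : (Fin n → ℂ) →ₗ[ℂ] (Fin n → ℂ) →ₗ[ℂ] (Fin k → ℂ) :=
  LinearMap.mk₂ ℂ (fun x y =>
    ((x ⟨1, by omega⟩ * y ⟨0, by omega⟩) •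
        (θ (e n ⟨1, by omega⟩) (e n ⟨0, by omega⟩) -
          θ (e n ⟨0, by omega⟩) (e n ⟨0, by omega⟩)) +
      (x ⟨n - 1, by omega⟩ * y ⟨0, by omega⟩) •
        θ (e n ⟨n - 1, by omega⟩) (e n ⟨0, by omega⟩) +
      (x ⟨0, by omega⟩ * y ⟨1, by omega⟩) •
        θ (e n ⟨0, by omega⟩) (e n ⟨1, by omega⟩) +
      (x ⟨1, by omega⟩ * y ⟨1, by omega⟩) •
        θ (e n ⟨1, by omega⟩) (e n ⟨1, by omega⟩)) +
      phi hn θ (F1mul n x y))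
    (by
      intro x x' y
      rw [mul_add_left, map_add]
      funext t
      simp only [Pi.add_apply, Pi.smul_apply, Pi.sub_apply, smul_eq_mul]
      ring)
    (by
      intro a x y
      rw [mul_smul_left, map_smul]
      funext t
      simp only [Pi.add_apply, Pi.smul_apply, Pi.sub_apply, smul_eq_mul]
      ring)
    (by
      intro x y y'
      rw [mul_add_right, map_add]
      funext t
      simp only [Pi.add_apply, Pi.smul_apply, Pi.sub_apply, smul_eq_mul]
      ring)
    (by
      intro a x y
      rw [mul_smul_right, map_smul]
      funext t
      simp only [Pi.add_apply, Pi.smul_apply, Pi.sub_apply, smul_eq_mul]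
      ring)

lemma Bmap_apply (x y : Fin n → ℂ) :
    Bmap hn θ x y =
      ((x ⟨1, by omega⟩ * y ⟨0, by omega⟩) •
          (θ (e n ⟨1, by omega⟩) (e n ⟨0, by omega⟩) -
            θ (e n ⟨0, by omega⟩) (e n ⟨0, by omega⟩)) +
        (x ⟨n - 1, by omega⟩ * y ⟨0, by omega⟩) •
          θ (e n ⟨n - 1, by omega⟩) (e n ⟨0, by omega⟩) +
        (x ⟨0, by omega⟩ * y ⟨1, by omega⟩) •
          θ (e n ⟨0, by omega⟩) (e n ⟨1, by omega⟩) +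
        (x ⟨1, by omega⟩ * y ⟨1, by omega⟩) •
          θ (e n ⟨1, by omega⟩) (e n ⟨1, by omega⟩)) +
        phi hn θ (F1mul n x y) := rfl

end Phi

section Main

variable (hn : n ≥ 4) {k : ℕ} (θ : (Fin n → ℂ) →ₗ[ℂ] (Fin n → ℂ) →ₗ[ℂ] (Fin k → ℂ))
  (hθ : ∀ x y z : Fin n → ℂ,
    θ x (F1mul n y z) = θ (F1mul n x y) z - θ (F1mul n x z) y)

include hn hθ in
lemma theta_eq_B : θ = Bmap hn θ := by
  apply (Pi.basisFun ℂ (Fin n)).ext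
  intro i
  apply (Pi.basisFun ℂ (Fin n)).ext
  intro j
  simp only [Pi.basisFun_apply]
  show θ (e n i) (e n j) = Bmap hn θ (e n i) (e n j)
  rw [Bmap_apply]
  obtain ⟨iv, hiv⟩ := i
  obtain ⟨jv, hjv⟩ := j
  have hn0 : ¬ (n - 1 = 0) := by omega
  have hn1 : ¬ (n - 1 = 1) := by omega
  have hn0' : ¬ ((0:ℕ) = n - 1) := by omega
  have hn1' : ¬ ((1:ℕ) = n - 1) := by omega
  by_cases hj0 : jv = 0
  · subst hj0
    by_cases hi0 : iv = 0
    · subst hi0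
      rw [mulE0_0 hn, phi_e, gfun_two]
      simp [e_apply, Fin.ext_iff, hn0, hn1, hn0', hn1']
    by_cases hi1 : iv = 1
    · subst hi1
      rw [mulE0_1 hn, phi_e, gfun_two]
      simp [e_apply, Fin.ext_iff, hn0, hn1, hn0', hn1']
      try abel
    by_cases hitop : iv = n - 1
    · subst hitop
      rw [mulE0_top hn, map_zero]
      simp [e_apply, Fin.ext_iff, hn0, hn1, hn0', hn1']
    · have h2 : 2 ≤ iv := by omega
      have hle : iv ≤ n - 2 := by omega
      have hi1' : ¬ (1 = iv) := by omega
      have hi0' : ¬ (0 = iv) := by omega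
      have hitop' : ¬ (n - 1 = iv) := by omega
      rw [mulE0_mid hn iv h2 hle, phi_e, gfun_ge3 hn θ (iv + 1) (by omega) (by omega)]
      simp [e_apply, Fin.ext_iff, hn0, hn1, hn0', hn1', hi1', hi0', hitop', Nat.add_sub_cancel]
  by_cases hj1 : jv = 1
  · subst hj1
    rw [mul_right_zero hn _ _ (by rw [e_apply]; simp [Fin.ext_iff]), map_zero]
    by_cases hi0 : iv = 0
    · subst hi0
      simp [e_apply, Fin.ext_iff, hn0, hn1, hn0', hn1']
    by_cases hi1 : iv = 1
    · subst hi1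
      simp [e_apply, Fin.ext_iff, hn0, hn1, hn0', hn1']
    · have h2 : 2 ≤ iv := by omega
      have hi1' : ¬ (1 = iv) := by omega
      have hi0' : ¬ (0 = iv) := by omega
      rw [show θ (e n ⟨iv, hiv⟩) (e n ⟨1, by omega⟩) = 0 from
        vanish_e1 hn θ hθ iv h2 hiv]
      simp [e_apply, Fin.ext_iff, hn0, hn1, hn0', hn1', hi1', hi0']
  · have hj2 : 2 ≤ jv := by omega
    have hj0' : ¬ ((0 : ℕ) = jv) := by omega
    have hj1' : ¬ ((1 : ℕ) = jv) := by omega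
    rw [mul_right_zero hn _ _ (by rw [e_apply]; simp [Fin.ext_iff]; omega), map_zero]
    rw [vanish_right hn θ hθ jv hj2 hjv (e n ⟨iv, hiv⟩)]
    simp [e_apply, Fin.ext_iff, hj0', hj1']

include hn hθ in
lemma main_id (x y : Fin n → ℂ) :
    θ x y -
      ((x ⟨1, by omega⟩ * y ⟨0, by omega⟩) •
          (θ (e n ⟨1, by omega⟩) (e n ⟨0, by omega⟩) -
            θ (e n ⟨0, by omega⟩) (e n ⟨0, by omega⟩)) +
        (x ⟨n - 1, by omega⟩ * y ⟨0, by omega⟩) •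
          θ (e n ⟨n - 1, by omega⟩) (e n ⟨0, by omega⟩) +
        (x ⟨0, by omega⟩ * y ⟨1, by omega⟩) •
          θ (e n ⟨0, by omega⟩) (e n ⟨1, by omega⟩) +
        (x ⟨1, by omega⟩ * y ⟨1, by omega⟩) •
          θ (e n ⟨1, by omega⟩) (e n ⟨1, by omega⟩)) =
      phi hn θ (F1mul n x y) := by
  rw [sub_eq_iff_eq_add']
  conv_lhs => rw [theta_eq_B hn θ hθ]
  rw [Bmap_apply]

include hn in
lemma mul_sub01_zero :
    F1mul n (e n ⟨0, by omega⟩ - e n ⟨1, by omega⟩) (e n ⟨0, by omega⟩) = 0 := by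
  funext m
  rw [mulE0 hn]
  simp only [Pi.sub_apply, e_apply, Fin.ext_iff, Fin.val_mk, Pi.zero_apply]
  split_ifs <;> first | contradiction | (exfalso; omega) | norm_num

include hn in
lemma combo_eq (c : Fin 4 → Fin k → ℂ) (φ : (Fin n → ℂ) →ₗ[ℂ] (Fin k → ℂ))
    (H : ∀ x y : Fin n → ℂ,
      θ x y -
        ((x ⟨1, by omega⟩ * y ⟨0, by omega⟩) • c 0 +
         (x ⟨n - 1, by omega⟩ * y ⟨0, by omega⟩) • c 1 +
         (x ⟨0, by omega⟩ * y ⟨1, by omega⟩) • c 2 +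
         (x ⟨1, by omega⟩ * y ⟨1, by omega⟩) • c 3) = φ (F1mul n x y)) :
    c 0 = θ (e n ⟨1, by omega⟩) (e n ⟨0, by omega⟩) -
            θ (e n ⟨0, by omega⟩) (e n ⟨0, by omega⟩) ∧
    c 1 = θ (e n ⟨n - 1, by omega⟩) (e n ⟨0, by omega⟩) ∧
    c 2 = θ (e n ⟨0, by omega⟩) (e n ⟨1, by omega⟩) ∧
    c 3 = θ (e n ⟨1, by omega⟩) (e n ⟨1, by omega⟩) := by
  have hn0 : ¬ (n - 1 = 0) := by omega
  have hn1 : ¬ (n - 1 = 1) := by omega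
  have hn0' : ¬ ((0:ℕ) = n - 1) := by omega
  have hn1' : ¬ ((1:ℕ) = n - 1) := by omega
  refine ⟨?_, ?_, ?_, ?_⟩
  · have h := H (e n ⟨0, by omega⟩ - e n ⟨1, by omega⟩) (e n ⟨0, by omega⟩)
    rw [mul_sub01_zero hn, map_zero, sub_eq_zero, map_sub] at h
    funext t
    have ht := congrFun h t
    simp only [LinearMap.sub_apply, Pi.sub_apply, Pi.add_apply, Pi.smul_apply,
      smul_eq_mul, e_apply, Fin.ext_iff, Fin.val_mk, hn0, hn1, hn0', hn1'] at ht
    norm_num at ht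
    simp only [Pi.sub_apply]
    linear_combination ht
  · have h := H (e n ⟨n - 1, by omega⟩) (e n ⟨0, by omega⟩)
    rw [mulE0_top hn, map_zero, sub_eq_zero] at h
    funext t
    have ht := congrFun h t
    simp only [Pi.sub_apply, Pi.add_apply, Pi.smul_apply,
      smul_eq_mul, e_apply, Fin.ext_iff, Fin.val_mk, hn0, hn1, hn0', hn1'] at ht
    norm_num at ht
    linear_combination -ht
  · have h := H (e n ⟨0, by omega⟩) (e n ⟨1, by omega⟩)
    rw [mul_right_zero hn _ _ (by rw [e_apply]; simp [Fin.ext_iff]),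
      map_zero, sub_eq_zero] at h
    funext t
    have ht := congrFun h t
    simp only [Pi.sub_apply, Pi.add_apply, Pi.smul_apply,
      smul_eq_mul, e_apply, Fin.ext_iff, Fin.val_mk, hn0, hn1, hn0', hn1'] at ht
    norm_num at ht
    linear_combination -ht
  · have h := H (e n ⟨1, by omega⟩) (e n ⟨1, by omega⟩)
    rw [mul_right_zero hn _ _ (by rw [e_apply]; simp [Fin.ext_iff]),
      map_zero, sub_eq_zero] at h
    funext t
    have ht := congrFun h t
    simp only [Pi.sub_apply, Pi.add_apply, Pi.smul_apply,
      smul_eq_mul, e_apply, Fin.ext_iff, Fin.val_mk, hn0, hn1, hn0', hn1'] at ht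
    norm_num at ht
    linear_combination -ht

end Main

end F1aux

/-- `dim HL^2(F_n^1, V) = 4k`, with cohomology classes represented by the
cocycles `θ_{1,j}(e_2,e_1)=x_j`, `θ_{2,j}(e_n,e_1)=x_j`,
`θ_{3,j}(e_1,e_2)=x_j`, `θ_{4,j}(e_2,e_2)=x_j`: every central 2-cocycle is
congruent modulo coboundaries to a unique linear combination of these. -/
theorem F1_HL2_dim (n k : ℕ) (hn : 4 ≤ n) :
    ∀ θ : (Fin n → ℂ) →ₗ[ℂ] (Fin n → ℂ) →ₗ[ℂ] (Fin k → ℂ),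
      (∀ x y z : Fin n → ℂ,
          θ x (F1mul n y z) = θ (F1mul n x y) z - θ (F1mul n x z) y) →
      ∃! c : Fin 4 → Fin k → ℂ, ∃ φ : (Fin n → ℂ) →ₗ[ℂ] (Fin k → ℂ),
        ∀ x y : Fin n → ℂ,
          θ x y -
            ((x ⟨1, by omega⟩ * y ⟨0, by omega⟩) • c 0 +
             (x ⟨n - 1, by omega⟩ * y ⟨0, by omega⟩) • c 1 +
             (x ⟨0, by omega⟩ * y ⟨1, by omega⟩) • c 2 +
             (x ⟨1, by omega⟩ * y ⟨1, by omega⟩) • c 3) = φ (F1mul n x y) := by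
  intro θ hθ
  set c : Fin 4 → Fin k → ℂ :=
    ![θ (F1aux.e n ⟨1, by omega⟩) (F1aux.e n ⟨0, by omega⟩) -
        θ (F1aux.e n ⟨0, by omega⟩) (F1aux.e n ⟨0, by omega⟩),
      θ (F1aux.e n ⟨n - 1, by omega⟩) (F1aux.e n ⟨0, by omega⟩),
      θ (F1aux.e n ⟨0, by omega⟩) (F1aux.e n ⟨1, by omega⟩),
      θ (F1aux.e n ⟨1, by omega⟩) (F1aux.e n ⟨1, by omega⟩)] with hc
  have hc0 : c 0 = θ (F1aux.e n ⟨1, by omega⟩) (F1aux.e n ⟨0, by omega⟩) -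
      θ (F1aux.e n ⟨0, by omega⟩) (F1aux.e n ⟨0, by omega⟩) := rfl
  have hc1 : c 1 = θ (F1aux.e n ⟨n - 1, by omega⟩) (F1aux.e n ⟨0, by omega⟩) := rfl
  have hc2 : c 2 = θ (F1aux.e n ⟨0, by omega⟩) (F1aux.e n ⟨1, by omega⟩) := rfl
  have hc3 : c 3 = θ (F1aux.e n ⟨1, by omega⟩) (F1aux.e n ⟨1, by omega⟩) := rfl
  have Hmain : ∀ x y : Fin n → ℂ,
      θ x y -
        ((x ⟨1, by omega⟩ * y ⟨0, by omega⟩) • c 0 +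
         (x ⟨n - 1, by omega⟩ * y ⟨0, by omega⟩) • c 1 +
         (x ⟨0, by omega⟩ * y ⟨1, by omega⟩) • c 2 +
         (x ⟨1, by omega⟩ * y ⟨1, by omega⟩) • c 3) = F1aux.phi hn θ (F1mul n x y) := by
    intro x y
    rw [hc0, hc1, hc2, hc3]
    exact F1aux.main_id hn θ hθ x y
  refine ⟨c, ⟨F1aux.phi hn θ, Hmain⟩, ?_⟩
  rintro c' ⟨φ', H'⟩
  obtain ⟨a0, a1, a2, a3⟩ := F1aux.combo_eq hn θ c' φ' H'
  obtain ⟨b0, b1, b2, b3⟩ := F1aux.combo_eq hn θ c (F1aux.phi hn θ) Hmain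
  funext t
  fin_cases t
  · exact a0.trans b0.symm
  · exact a1.trans b1.symm
  · exact a2.trans b2.symm
  · exact a3.trans b3.symm
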